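/- Let μ ≠ 1 be a nonzero complex number, let π be a group with elements m, w, and suppose ε is a function on π to ℂ satisfying the cord-algebra relations: ε(e) = 1−μ, ε(m^{±1}g) = μ^{±1}ε(g) = ε(gm^{±1}), and ε(g₁g₂) − ε(g₁mg₂) = ε(g₁)ε(g₂) for all g, g₁, g₂ ∈ π. If additionally w satisfies w^k(mwm^{-1}w^{-1}m^{-1}) = (m^{-1}w^{-1}mwmw^{-1})w^k in π, then ε(w^k) = μ^{-2}ε(w^{-1})²ε(w^{k+1}) − 2μ^{-1}ε(w^k)ε(w^{-1})(1 + μ^{-1}ε(w)ε(w^{-1})) + ε(w^{k−1})(1 + μ^{-1}ε(w)ε(w^{-1}))². -/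
import Mathlib


/-- Let `ε : π → ℂ` satisfy the cord-algebra relations, and
suppose `wᵏ E = F wᵏ` in `π`, where `E = m w m⁻¹ w⁻¹ m⁻¹` and
`F = m⁻¹ w⁻¹ m w m w⁻¹`.  Then
`ε(wᵏ) = μ⁻² ε(w⁻¹)² ε(w^{k+1}) − 2μ⁻¹ ε(wᵏ) ε(w⁻¹)(1 + μ⁻¹ ε(w) ε(w⁻¹))
  + ε(w^{k−1})(1 + μ⁻¹ ε(w) ε(w⁻¹))²`. -/
theorem stmt17 {π : Type*} [Group π] (μ : ℂ) (hμ0 : μ ≠ 0) (hμ1 : μ ≠ 1)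
    (m w : π) (ε : π → ℂ)
    (he : ε 1 = 1 - μ)
    (hm : ∀ g : π, ε (m * g) = μ * ε g ∧ ε (g * m) = μ * ε g)
    (hminv : ∀ g : π, ε (m⁻¹ * g) = μ⁻¹ * ε g ∧ ε (g * m⁻¹) = μ⁻¹ * ε g)
    (hprod : ∀ g₁ g₂ : π, ε (g₁ * g₂) - ε (g₁ * m * g₂) = ε g₁ * ε g₂)
    (k : ℤ)
    (hrel : w ^ k * (m * w * m⁻¹ * w⁻¹ * m⁻¹) =
      (m⁻¹ * w⁻¹ * m * w * m * w⁻¹) * w ^ k) :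
    ε (w ^ k) =
      μ⁻¹ ^ 2 * ε w⁻¹ ^ 2 * ε (w ^ (k + 1)) -
        2 * μ⁻¹ * ε (w ^ k) * ε w⁻¹ * (1 + μ⁻¹ * ε w * ε w⁻¹) +
        ε (w ^ (k - 1)) * (1 + μ⁻¹ * ε w * ε w⁻¹) ^ 2 := by
  have hone : μ * μ⁻¹ = 1 := mul_inv_cancel₀ hμ0
  -- interior expansion rules
  have midm : ∀ g₁ g₂ : π, ε (g₁ * m * g₂) = ε (g₁ * g₂) - ε g₁ * ε g₂ := by
    intro g₁ g₂
    linear_combination -hprod g₁ g₂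
  have midM : ∀ g₁ g₂ : π, ε (g₁ * m⁻¹ * g₂) = ε (g₁ * g₂) + μ⁻¹ * ε g₁ * ε g₂ := by
    intro g₁ g₂
    have h := hprod (g₁ * m⁻¹) g₂
    rw [show g₁ * m⁻¹ * m * g₂ = g₁ * g₂ by group, (hminv g₁).2] at h
    linear_combination h
  -- LHS of eq1
  have A : ε (w ^ k * (m * w * m⁻¹ * w⁻¹ * m⁻¹)) =
      μ⁻¹ * (μ * ε (w ^ k) + μ⁻¹ * (ε (w ^ (k + 1)) - ε (w ^ k) * ε w) * ε w⁻¹) := by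
    rw [show w ^ k * (m * w * m⁻¹ * w⁻¹ * m⁻¹) = (w ^ k * m * w * m⁻¹ * w⁻¹) * m⁻¹ by group,
      (hminv _).2,
      show w ^ k * m * w * m⁻¹ * w⁻¹ = (w ^ k * m * w) * m⁻¹ * w⁻¹ by group,
      midM (w ^ k * m * w) w⁻¹,
      show w ^ k * m * w * w⁻¹ = w ^ k * m by group,
      (hm _).2,
      midm (w ^ k) w,
      show w ^ k * w = w ^ (k + 1) by group]
  -- RHS of eq1
  have B : ε ((m⁻¹ * w⁻¹ * m * w * m * w⁻¹) * w ^ k) =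
      μ⁻¹ * (μ * ε (w ^ (k - 1)) - ε w⁻¹ * (ε (w ^ k) - ε w * ε (w ^ (k - 1)))) := by
    rw [show (m⁻¹ * w⁻¹ * m * w * m * w⁻¹) * w ^ k
        = m⁻¹ * (w⁻¹ * m * (w * m * w ^ (k - 1))) by group,
      (hminv _).1,
      midm w⁻¹ (w * m * w ^ (k - 1)),
      show w⁻¹ * (w * m * w ^ (k - 1)) = m * w ^ (k - 1) by group,
      (hm _).1,
      midm w (w ^ (k - 1)),
      show w * w ^ (k - 1) = w ^ k by group]
  have eq1 : μ⁻¹ * (μ * ε (w ^ k) + μ⁻¹ * (ε (w ^ (k + 1)) - ε (w ^ k) * ε w) * ε w⁻¹) =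
      μ⁻¹ * (μ * ε (w ^ (k - 1)) - ε w⁻¹ * (ε (w ^ k) - ε w * ε (w ^ (k - 1)))) := by
    rw [← A, ← B, hrel]
  -- second instance: multiply hrel by w on the right
  have hrel2 : w ^ k * (m * w * m⁻¹ * w⁻¹ * m⁻¹) * w =
      (m⁻¹ * w⁻¹ * m * w * m * w⁻¹) * w ^ k * w := by rw [hrel]
  -- LHS of eq2
  have C : ε (w ^ k * (m * w * m⁻¹ * w⁻¹ * m⁻¹) * w) =
      (ε (w ^ (k + 1)) + μ⁻¹ * ε (w ^ k) * ε w
        + μ⁻¹ * ε (w ^ (k + 1)) * ((1 - μ) + μ⁻¹ * ε w⁻¹ * ε w))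
      - ε (w ^ k) * (μ⁻¹ * ε w + μ⁻¹ * ε w * ((1 - μ) + μ⁻¹ * ε w⁻¹ * ε w)) := by
    have t3 : ε (w⁻¹ * m⁻¹ * w) = (1 - μ) + μ⁻¹ * ε w⁻¹ * ε w := by
      rw [midM w⁻¹ w, show w⁻¹ * w = 1 by group, he]
    have t2 : ε (w ^ (k + 1) * m⁻¹ * (w⁻¹ * m⁻¹ * w)) =
        (ε (w ^ (k + 1)) + μ⁻¹ * ε (w ^ k) * ε w)
          + μ⁻¹ * ε (w ^ (k + 1)) * ((1 - μ) + μ⁻¹ * ε w⁻¹ * ε w) := by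
      rw [midM (w ^ (k + 1)) (w⁻¹ * m⁻¹ * w), t3,
        show w ^ (k + 1) * (w⁻¹ * m⁻¹ * w) = w ^ k * m⁻¹ * w by group,
        midM (w ^ k) w, show w ^ k * w = w ^ (k + 1) by group]
    have t4 : ε (w * m⁻¹ * (w⁻¹ * m⁻¹ * w)) =
        μ⁻¹ * ε w + μ⁻¹ * ε w * ((1 - μ) + μ⁻¹ * ε w⁻¹ * ε w) := by
      rw [midM w (w⁻¹ * m⁻¹ * w), t3,
        show w * (w⁻¹ * m⁻¹ * w) = m⁻¹ * w by group, (hminv w).1]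
    rw [show w ^ k * (m * w * m⁻¹ * w⁻¹ * m⁻¹) * w
        = w ^ k * m * (w * m⁻¹ * (w⁻¹ * m⁻¹ * w)) by group,
      midm (w ^ k) (w * m⁻¹ * (w⁻¹ * m⁻¹ * w)), t4,
      show w ^ k * (w * m⁻¹ * (w⁻¹ * m⁻¹ * w)) = w ^ (k + 1) * m⁻¹ * (w⁻¹ * m⁻¹ * w) by group,
      t2]
  -- RHS of eq2
  have D : ε ((m⁻¹ * w⁻¹ * m * w * m * w⁻¹) * w ^ k * w) =
      μ⁻¹ * (μ * ε (w ^ k) - ε w⁻¹ * (ε (w ^ (k + 1)) - ε w * ε (w ^ k))) := by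
    rw [show (m⁻¹ * w⁻¹ * m * w * m * w⁻¹) * w ^ k * w
        = m⁻¹ * (w⁻¹ * m * (w * m * w ^ k)) by group,
      (hminv _).1,
      midm w⁻¹ (w * m * w ^ k),
      show w⁻¹ * (w * m * w ^ k) = m * w ^ k by group,
      (hm _).1,
      midm w (w ^ k),
      show w * w ^ k = w ^ (k + 1) by group]
  have eq2 : (ε (w ^ (k + 1)) + μ⁻¹ * ε (w ^ k) * ε w
        + μ⁻¹ * ε (w ^ (k + 1)) * ((1 - μ) + μ⁻¹ * ε w⁻¹ * ε w))
      - ε (w ^ k) * (μ⁻¹ * ε w + μ⁻¹ * ε w * ((1 - μ) + μ⁻¹ * ε w⁻¹ * ε w)) =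
      μ⁻¹ * (μ * ε (w ^ k) - ε w⁻¹ * (ε (w ^ (k + 1)) - ε w * ε (w ^ k))) := by
    rw [← C, ← D, hrel2]
  linear_combination (1 + μ⁻¹ * ε w * ε w⁻¹) * eq1 - μ⁻¹ * ε w⁻¹ * eq2 +
    (ε (w ^ (k - 1)) * (1 + μ⁻¹ * ε w * ε w⁻¹) - ε (w ^ k) * (1 + μ⁻¹ * ε w⁻¹)
      - μ⁻¹ * ε w⁻¹ * ε (w ^ (k + 1))) * hone
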